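/- For all integers 1 ≤ k ≤ d and every integer N ≥ 2, one has bp_k(K_N) ≤ d if and only if N ≤ n(k,d); in other words, n(k,d) is the largest positive integer N such that bp_k(K_N) ≤ d. -/

import Mathlib

/-- The three-letter alphabet `S = {0, 1, ∗}`. -/
inductive Tern | zero | one | star
deriving DecidableEq

instance instFintypeTern : Fintype Tern where
  elems := {Tern.zero, Tern.one, Tern.star}
  complete := by intro x; cases x <;> simp

/-- `clash x y` is true iff both `x, y ∈ {0,1}` and `x ≠ y`. -/
def clash : Tern → Tern → Bool
  | Tern.zero, Tern.one => true
  | Tern.one, Tern.zero => true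
  | _, _ => false

/-- `dist u v`: the number of positions where both letters are binary and they differ. -/
def dist {d : ℕ} (u v : Fin d → Tern) : ℕ :=
  (Finset.univ.filter (fun i => clash (u i) (v i))).card

/-- A `k`-neighborly code in `S^d`: every two distinct members `u, v`
satisfy `1 ≤ dist(u,v) ≤ k`. -/
def IsNeighborlyCode (k d : ℕ) (V : Finset (Fin d → Tern)) : Prop :=
  ∀ u ∈ V, ∀ v ∈ V, u ≠ v → 1 ≤ dist u v ∧ dist u v ≤ k

/-- `n(k,d)`: the maximum size of a `k`-neighborly code in `S^d`. -/
noncomputable def nMax (k d : ℕ) : ℕ :=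
  sSup {m : ℕ | ∃ V : Finset (Fin d → Tern), IsNeighborlyCode k d V ∧ V.card = m}

/-- The number of bipartite cliques (given by their parts `X i`, `Y i`) of the
covering that contain the edge `uv`. -/
def coverCount {N m : ℕ} (X Y : Fin m → Finset (Fin N)) (u v : Fin N) : ℕ :=
  (Finset.univ.filter (fun i => (u ∈ X i ∧ v ∈ Y i) ∨ (u ∈ Y i ∧ v ∈ X i))).card

/-- `K_N` admits a collection of `m` complete bipartite subgraphs (each given by a
pair of disjoint nonempty vertex sets) such that every edge of `K_N` lies in at
least one and at most `k` of them. -/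
def HasBipCover (k N m : ℕ) : Prop :=
  ∃ X Y : Fin m → Finset (Fin N),
    (∀ i, (X i).Nonempty ∧ (Y i).Nonempty ∧ Disjoint (X i) (Y i)) ∧
    ∀ u v : Fin N, u ≠ v → 1 ≤ coverCount X Y u v ∧ coverCount X Y u v ≤ k

/-- `bp_k(K_N)`: the minimum number of complete bipartite subgraphs of `K_N`
covering every edge at least once and at most `k` times. -/
noncomputable def bp (k N : ℕ) : ℕ := sInf {m : ℕ | HasBipCover k N m}

/- ### Auxiliary lemmas -/

lemma clash_self (x : Tern) : clash x x = false := by cases x <;> rfl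

lemma clash_iff (x y : Tern) : clash x y = true ↔
    (x = Tern.zero ∧ y = Tern.one) ∨ (x = Tern.one ∧ y = Tern.zero) := by
  cases x <;> cases y <;> simp [clash]

lemma tern_dist_self {d : ℕ} (u : Fin d → Tern) : dist u u = 0 := by
  unfold _root_.dist
  simp [clash_self]

/-- From a biclique cover of `K_N` with `m ≤ d` parts, build a neighborly code. -/
lemma cover_to_code {k N m d : ℕ} (hm : m ≤ d) (h : HasBipCover k N m) :
    ∃ V : Finset (Fin d → Tern), IsNeighborlyCode k d V ∧ V.card = N := by
  classical
  obtain ⟨X, Y, hXY, hcov⟩ := h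
  set letter : Fin N → Fin m → Tern := fun u i =>
    if u ∈ X i then Tern.zero else if u ∈ Y i then Tern.one else Tern.star with hletter
  set w : Fin N → Fin d → Tern := fun u j =>
    if hj : (j : ℕ) < m then letter u ⟨j.1, hj⟩ else Tern.star with hw
  have hclash_letter : ∀ (u v : Fin N) (i : Fin m),
      (clash (letter u i) (letter v i) = true) ↔
        ((u ∈ X i ∧ v ∈ Y i) ∨ (u ∈ Y i ∧ v ∈ X i)) := by
    intro u v i
    have hd := Finset.disjoint_left.1 (hXY i).2.2
    have hz : ∀ a : Fin N, letter a i = Tern.zero ↔ a ∈ X i := by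
      intro a
      by_cases h1 : a ∈ X i <;> by_cases h2 : a ∈ Y i <;> simp [hletter, h1, h2]
    have ho : ∀ a : Fin N, letter a i = Tern.one ↔ a ∈ Y i := by
      intro a
      by_cases h1 : a ∈ X i
      · simp [hletter, h1, hd h1]
      · by_cases h2 : a ∈ Y i <;> simp [hletter, h1, h2]
    rw [clash_iff, hz u, ho v, ho u, hz v]
  have hcast : ∀ (u : Fin N) (i : Fin m), w u (Fin.castLE hm i) = letter u i := by
    intro u i
    have hj : ((Fin.castLE hm i : Fin d) : ℕ) < m := i.2
    simp only [hw, dif_pos hj]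
    exact congrArg (letter u) (Fin.ext rfl)
  have hwout : ∀ (u : Fin N) (j : Fin d), ¬ (j : ℕ) < m → w u j = Tern.star := by
    intro u j hj
    simp only [hw, dif_neg hj]
  have hdist : ∀ u v : Fin N, dist (w u) (w v) = coverCount X Y u v := by
    intro u v
    unfold _root_.dist coverCount
    rw [show (Finset.univ.filter fun j : Fin d => clash (w u j) (w v j)) =
        (Finset.univ.filter fun i : Fin m =>
          (u ∈ X i ∧ v ∈ Y i) ∨ (u ∈ Y i ∧ v ∈ X i)).map
          ⟨Fin.castLE hm, Fin.castLE_injective hm⟩ from ?_, Finset.card_map]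
    ext j
    simp only [Finset.mem_filter, Finset.mem_univ, true_and, Finset.mem_map,
      Function.Embedding.coeFn_mk]
    constructor
    · intro hcl
      have hj : (j : ℕ) < m := by
        by_contra hjm
        rw [hwout u j hjm, hwout v j hjm] at hcl
        simp [clash] at hcl
      refine ⟨⟨j.1, hj⟩, ?_, by ext; rfl⟩
      have hcj : Fin.castLE hm (⟨j.1, hj⟩ : Fin m) = j := by ext; rfl
      rw [← hclash_letter u v ⟨j.1, hj⟩, ← hcast u ⟨j.1, hj⟩, ← hcast v ⟨j.1, hj⟩, hcj]
      exact hcl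
    · rintro ⟨i, hi, rfl⟩
      rw [hcast, hcast]
      exact (hclash_letter u v i).2 hi
  have hinj : Function.Injective w := by
    intro u v huv
    by_contra hne
    have h1 := (hcov u v hne).1
    rw [← hdist, huv, tern_dist_self] at h1
    omega
  refine ⟨Finset.univ.image w, ?_, ?_⟩
  · intro x hx y hy hxy
    obtain ⟨u, -, rfl⟩ := Finset.mem_image.1 hx
    obtain ⟨v, -, rfl⟩ := Finset.mem_image.1 hy
    rw [hdist]
    exact hcov u v (fun h => hxy (by rw [h]))
  · rw [Finset.card_image_of_injective _ hinj, Finset.card_univ, Fintype.card_fin]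

/-- From a neighborly code of size `N` in `S^d`, build a biclique cover of `K_N`
with at most `d` parts. -/
lemma code_to_cover {k d N : ℕ} (V : Finset (Fin d → Tern)) (hV : IsNeighborlyCode k d V)
    (hcard : V.card = N) : ∃ m ≤ d, HasBipCover k N m := by
  classical
  have e : Fin N ≃ V := (Finset.equivFinOfCardEq hcard).symm
  set f : Fin N → Fin d → Tern := fun u => (e u : Fin d → Tern) with hf
  have hfinj : Function.Injective f := fun a b h => e.injective (Subtype.ext h)
  set good : Finset (Fin d) :=
    Finset.univ.filter (fun j => (∃ u, f u j = Tern.zero) ∧ (∃ u, f u j = Tern.one))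
    with hgood
  set m := good.card with hmdef
  have hm : m ≤ d := by
    have := Finset.card_le_univ good
    simpa using this
  have g : Fin m ≃ good := good.equivFin.symm
  refine ⟨m, hm, fun i => Finset.univ.filter (fun u => f u ((g i : Fin d)) = Tern.zero),
    fun i => Finset.univ.filter (fun u => f u ((g i : Fin d)) = Tern.one), ?_, ?_⟩
  · intro i
    have hgi : (g i : Fin d) ∈ Finset.univ.filter
        (fun j => (∃ u, f u j = Tern.zero) ∧ (∃ u, f u j = Tern.one)) := (g i).2
    obtain ⟨-, ⟨u0, hu0⟩, ⟨u1, hu1⟩⟩ := Finset.mem_filter.1 hgi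
    refine ⟨⟨u0, by simp [hu0]⟩, ⟨u1, by simp [hu1]⟩, ?_⟩
    rw [Finset.disjoint_left]
    intro a ha ha'
    simp only [Finset.mem_filter, Finset.mem_univ, true_and] at ha ha'
    rw [ha] at ha'
    exact Tern.noConfusion ha'
  · intro u v huv
    have hkey : coverCount (fun i => Finset.univ.filter (fun u => f u ((g i : Fin d)) = Tern.zero))
        (fun i => Finset.univ.filter (fun u => f u ((g i : Fin d)) = Tern.one)) u v
        = dist (f u) (f v) := by
      unfold coverCount _root_.dist
      rw [show (Finset.univ.filter fun j : Fin d => clash (f u j) (f v j)) =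
          good.filter (fun j => clash (f u j) (f v j)) from ?_]
      · apply Finset.card_bij (fun i _ => (g i : Fin d))
        · intro i hi
          simp only [Finset.mem_filter, Finset.mem_univ, true_and] at hi ⊢
          refine ⟨(g i).2, ?_⟩
          rw [clash_iff]
          rcases hi with ⟨h1, h2⟩ | ⟨h1, h2⟩
          · exact Or.inl ⟨h1, h2⟩
          · exact Or.inr ⟨h1, h2⟩
        · intro a _ b _ hab
          exact g.injective (Subtype.ext hab)
        · intro j hj
          simp only [Finset.mem_filter] at hj
          obtain ⟨hjg, hjc⟩ := hj
          refine ⟨g.symm ⟨j, hjg⟩, ?_, by simp⟩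
          simp only [Finset.mem_filter, Finset.mem_univ, true_and, Equiv.apply_symm_apply]
          rw [clash_iff] at hjc
          rcases hjc with ⟨h1, h2⟩ | ⟨h1, h2⟩
          · exact Or.inl ⟨by simpa using h1, by simpa using h2⟩
          · exact Or.inr ⟨by simpa using h1, by simpa using h2⟩
      · ext j
        simp only [Finset.mem_filter, Finset.mem_univ, true_and, iff_and_self]
        intro hcl
        rw [clash_iff] at hcl
        rw [hgood, Finset.mem_filter]
        rcases hcl with ⟨h1, h2⟩ | ⟨h1, h2⟩
        · exact ⟨Finset.mem_univ _, ⟨u, h1⟩, ⟨v, h2⟩⟩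
        · exact ⟨Finset.mem_univ _, ⟨v, h2⟩, ⟨u, h1⟩⟩
    rw [hkey]
    exact hV (f u) (e u).2 (f v) (e v).2 (fun h => huv (hfinj h))

/-- There is always some biclique cover of `K_N` (for `k ≥ 1`). -/
lemma exists_cover (k N : ℕ) (hk : 1 ≤ k) : ∃ m, HasBipCover k N m := by
  classical
  set w : Fin N → Fin N → Tern := fun u j =>
    if (j : ℕ) < (u : ℕ) then Tern.zero
    else if j = u then Tern.one else Tern.star with hw
  have hclash : ∀ u v : Fin N, (u : ℕ) < (v : ℕ) → ∀ j : Fin N,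
      (clash (w u j) (w v j) = true) ↔ j = u := by
    intro u v huv j
    rcases lt_trichotomy (j : ℕ) (u : ℕ) with h | h | h
    · have h1 : w u j = Tern.zero := by
        simp only [hw]; rw [if_pos h]
      have h2 : w v j = Tern.zero := by
        simp only [hw]; rw [if_pos (lt_trans h huv)]
      rw [h1, h2]
      simp only [clash_iff]
      constructor
      · rintro (⟨-, hh⟩ | ⟨hh, -⟩) <;> cases hh
      · intro hh; rw [hh] at h; omega
    · have hju : j = u := Fin.ext h
      have h1 : w u j = Tern.one := by
        simp only [hw]
        rw [if_neg (by omega : ¬ (j : ℕ) < (u : ℕ)), if_pos hju]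
      have h2 : w v j = Tern.zero := by
        have hlt : (j : ℕ) < (v : ℕ) := by omega
        simp only [hw]; rw [if_pos hlt]
      rw [h1, h2]
      simp [clash_iff, hju]
    · have hju : j ≠ u := by
        intro hh; rw [hh] at h; omega
      have hju' : ¬ (j : ℕ) < (u : ℕ) := by omega
      have h1 : w u j = Tern.star := by
        simp only [hw]; rw [if_neg hju', if_neg hju]
      rw [h1]
      constructor
      · intro hh
        rw [clash_iff] at hh
        rcases hh with ⟨hh, -⟩ | ⟨hh, -⟩ <;> cases hh
      · intro hh; exact absurd hh hju
  have hdist : ∀ u v : Fin N, u ≠ v → dist (w u) (w v) = 1 := by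
    have key : ∀ u v : Fin N, (u : ℕ) < (v : ℕ) → dist (w u) (w v) = 1 := by
      intro u v huv
      unfold _root_.dist
      rw [show (Finset.univ.filter fun j : Fin N => clash (w u j) (w v j)) = {u} from ?_]
      · exact Finset.card_singleton u
      · ext j
        simp only [Finset.mem_filter, Finset.mem_univ, true_and, Finset.mem_singleton]
        exact hclash u v huv j
    intro u v huv
    rcases lt_trichotomy (u : ℕ) (v : ℕ) with h | h | h
    · exact key u v h
    · exact absurd (Fin.ext h) huv
    · have : dist (w u) (w v) = dist (w v) (w u) := by
        unfold _root_.dist; congr 1; apply Finset.filter_congr; intro j _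
        cases w u j <;> cases w v j <;> rfl
      rw [this]; exact key v u h
  have hinj : Function.Injective w := by
    intro u v huv
    by_contra hne
    have := hdist u v hne
    rw [huv, tern_dist_self] at this
    omega
  have hcode : IsNeighborlyCode k N (Finset.univ.image w) := by
    intro x hx y hy hxy
    obtain ⟨u, -, rfl⟩ := Finset.mem_image.1 hx
    obtain ⟨v, -, rfl⟩ := Finset.mem_image.1 hy
    rw [hdist u v (fun h => hxy (by rw [h]))]
    exact ⟨le_refl 1, hk⟩
  have hcard : (Finset.univ.image w).card = N := by
    rw [Finset.card_image_of_injective _ hinj, Finset.card_univ, Fintype.card_fin]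
  obtain ⟨m, -, hcov⟩ := code_to_cover (Finset.univ.image w) hcode hcard
  exact ⟨m, hcov⟩

/-- For `1 ≤ k ≤ d` and every `N ≥ 2`, `bp_k(K_N) ≤ d` iff `N ≤ n(k,d)`;
i.e. `n(k,d)` is the largest `N` with `bp_k(K_N) ≤ d`. -/
theorem bp_le_iff_le_nMax (k d : ℕ) (hk : 1 ≤ k) (hkd : k ≤ d) (N : ℕ) (hN : 2 ≤ N) :
    bp k N ≤ d ↔ N ≤ nMax k d := by
  classical
  have hbdd : BddAbove {m : ℕ | ∃ V : Finset (Fin d → Tern),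
      IsNeighborlyCode k d V ∧ V.card = m} := by
    refine ⟨Fintype.card (Fin d → Tern), ?_⟩
    rintro x ⟨V, -, rfl⟩
    exact Finset.card_le_univ V
  have hneS : {m : ℕ | ∃ V : Finset (Fin d → Tern),
      IsNeighborlyCode k d V ∧ V.card = m}.Nonempty := by
    exact ⟨0, ∅, by intro u hu; simp at hu, rfl⟩
  constructor
  · intro hbp
    have hne : {m : ℕ | HasBipCover k N m}.Nonempty := exists_cover k N hk
    have hmem : HasBipCover k N (bp k N) := Nat.sInf_mem hne
    obtain ⟨V, hV, hcard⟩ := cover_to_code hbp hmem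
    exact le_csSup hbdd ⟨V, hV, hcard⟩
  · intro hNle
    have hmem := Nat.sSup_mem hneS hbdd
    obtain ⟨V, hV, hcard⟩ := hmem
    obtain ⟨W, hWV, hWcard⟩ := Finset.exists_subset_card_eq (s := V) (n := N) (by rw [hcard]; exact hNle)
    have hW : IsNeighborlyCode k d W := fun u hu v hv h => hV u (hWV hu) v (hWV hv) h
    obtain ⟨m, hm, hcov⟩ := code_to_cover W hW hWcard
    exact le_trans (Nat.sInf_le hcov) hm
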